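/- Let w be a fully commutative element of the affine Coxeter group W(Ã_n) whose affine length L(w) (the multiplicity of a_{n+1} in w) satisfies L(w) ≥ 2, and write w = u_1 a_{n+1} u_2 a_{n+1} ⋯ u_m a_{n+1} u_{m+1} with each u_i ∈ W(A_n) fully commutative. Then for every i with 2 ≤ i ≤ m, the element u_i is full, i.e., both σ_1 and σ_n belong to Supp(u_i). -/

import Mathlib

open CoxeterSystem

/-- The Coxeter matrix of affine type Ãₙ: generators indexed by `Fin (n+1)` arranged in a
cycle (index `k` is `σ_{k+1}` for `k < n`, and index `n` is `a_{n+1}`); cyclically adjacent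
generators braid with order 3, and all other pairs commute. -/
def affineAMatrix (n : ℕ) : CoxeterMatrix (Fin (n + 1)) where
  M := Matrix.of fun i j : Fin (n + 1) =>
    if i = j then 1 else if i - j = 1 ∨ j - i = 1 then 3 else 2
  isSymm := by
    unfold Matrix.IsSymm
    ext i j
    simp only [Matrix.transpose_apply, Matrix.of_apply]
    by_cases h : i = j
    · simp [h]
    · simp [h, Ne.symm h, or_comm]
  diagonal := by simp
  off_diagonal := by aesop

def CommMove {B : Type*} (M : CoxeterMatrix B) (ω₁ ω₂ : List B) : Prop :=
  ∃ (l r : List B) (s t : B), M s t = 2 ∧ ω₁ = l ++ s :: t :: r ∧ ω₂ = l ++ t :: s :: r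

def CommEquiv {B : Type*} (M : CoxeterMatrix B) : List B → List B → Prop :=
  Relation.ReflTransGen (CommMove M)

def IsRedexOf {B W : Type*} [Group W] {M : CoxeterMatrix B} (cs : CoxeterSystem M W)
    (ω : List B) (w : W) : Prop :=
  cs.wordProd ω = w ∧ cs.IsReduced ω

def IsFC {B W : Type*} [Group W] {M : CoxeterMatrix B} (cs : CoxeterSystem M W) (w : W) : Prop :=
  ∀ ω₁ ω₂, IsRedexOf cs ω₁ w → IsRedexOf cs ω₂ w → CommEquiv M ω₁ ω₂

/-- The decreasing word `[i, i-1, ..., j]` of (1-based) generator subscripts. -/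
def decW (i j : ℕ) : List ℕ := (List.range' j (i + 1 - j)).reverse

/-- The increasing word `[i, i+1, ..., j]` of (1-based) generator subscripts. -/
def incW (i j : ℕ) : List ℕ := List.range' i (j + 1 - i)

open Fin.NatCast

namespace MFFaux


variable {B W : Type*} [Group W] {M : CoxeterMatrix B} (cs : CoxeterSystem M W)

lemma simple_comm {s t : B} (h : M s t = 2) :
    cs.simple s * cs.simple t = cs.simple t * cs.simple s := by
  have h2 : (cs.simple s * cs.simple t) ^ 2 = 1 := by
    have := cs.simple_mul_simple_pow s t; rwa [h] at this
  have h3 : cs.simple s * cs.simple t = (cs.simple s * cs.simple t)⁻¹ := by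
    rw [eq_inv_iff_mul_eq_one, ← sq, h2]
  rw [h3, mul_inv_rev, cs.inv_simple, cs.inv_simple]

lemma simple_braid {s t : B} (h : M s t = 3) :
    cs.simple s * cs.simple t * cs.simple s = cs.simple t * cs.simple s * cs.simple t := by
  have h2 : (cs.simple s * cs.simple t) ^ 3 = 1 := by
    have := cs.simple_mul_simple_pow s t; rwa [h] at this
  have key1 : cs.simple s * (cs.simple t * (cs.simple s * (cs.simple t *
      (cs.simple s * cs.simple t)))) = 1 := by
    simpa only [pow_succ, pow_zero, one_mul, mul_assoc] using h2
  have key : cs.simple s * cs.simple t * cs.simple s =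
      (cs.simple t * cs.simple s * cs.simple t)⁻¹ := by
    rw [eq_inv_iff_mul_eq_one]
    simpa only [mul_assoc] using key1
  rw [key]
  simp [mul_inv_rev, cs.inv_simple, mul_assoc]

lemma commMove_symm {ω₁ ω₂ : List B} (h : CommMove M ω₁ ω₂) : CommMove M ω₂ ω₁ := by
  obtain ⟨l, r, s, t, hst, h1, h2⟩ := h
  refine ⟨l, r, t, s, ?_, h2, h1⟩
  have := M.isSymm; rw [Matrix.IsSymm] at this
  calc M t s = M.M.transpose s t := rfl
  _ = M s t := by rw [this]
  _ = 2 := hst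

lemma commEquiv_symm {ω₁ ω₂ : List B} (h : CommEquiv M ω₁ ω₂) : CommEquiv M ω₂ ω₁ := by
  induction h with
  | refl => exact Relation.ReflTransGen.refl
  | tail _ h2 ih => exact Relation.ReflTransGen.head (commMove_symm h2) ih

lemma commMove_perm {ω₁ ω₂ : List B} (h : CommMove M ω₁ ω₂) : ω₁.Perm ω₂ := by
  obtain ⟨l, r, s, t, _, h1, h2⟩ := h
  subst h1; subst h2
  exact (List.Perm.append_left l (List.Perm.swap t s r))

lemma commEquiv_perm {ω₁ ω₂ : List B} (h : CommEquiv M ω₁ ω₂) : ω₁.Perm ω₂ := by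
  induction h with
  | refl => exact List.Perm.refl _
  | tail _ h2 ih => exact ih.trans (commMove_perm h2)

lemma commMove_wordProd {ω₁ ω₂ : List B} (h : CommMove M ω₁ ω₂) :
    cs.wordProd ω₁ = cs.wordProd ω₂ := by
  obtain ⟨l, r, s, t, hst, h1, h2⟩ := h
  subst h1; subst h2
  simp only [cs.wordProd_append, cs.wordProd_cons]
  rw [← mul_assoc (cs.simple s), simple_comm cs hst, mul_assoc]

lemma commEquiv_wordProd {ω₁ ω₂ : List B} (h : CommEquiv M ω₁ ω₂) :
    cs.wordProd ω₁ = cs.wordProd ω₂ := by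
  induction h with
  | refl => rfl
  | tail _ h2 ih => exact ih.trans (commMove_wordProd cs h2)

lemma commEquiv_context {ω₁ ω₂ : List B} (a b : List B) (h : CommEquiv M ω₁ ω₂) :
    CommEquiv M (a ++ ω₁ ++ b) (a ++ ω₂ ++ b) := by
  refine Relation.ReflTransGen.lift (fun x => a ++ x ++ b) ?_ _ _ h
  rintro x y ⟨l, r, s, t, hst, h1, h2⟩
  exact ⟨a ++ l, r ++ b, s, t, hst, by simp [h1], by simp [h2]⟩

lemma commEquiv_shift {s : B} {mid : List B} (h : ∀ t ∈ mid, M s t = 2) :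
    CommEquiv M (s :: mid) (mid ++ [s]) := by
  induction mid with
  | nil => exact Relation.ReflTransGen.refl
  | cons t mid ih =>
    have step : CommMove M (s :: t :: mid) (t :: s :: mid) :=
      ⟨[], mid, s, t, h t (by simp), rfl, rfl⟩
    refine Relation.ReflTransGen.head step ?_
    have := commEquiv_context (M := M) [t] [] (ih (fun x hx => h x (by simp [hx])))
    simp at this; exact this





variable {B W : Type*} [Group W] {M : CoxeterMatrix B} {cs : CoxeterSystem M W}

/-- In a reduced word, between two occurrences of `s` there must be a letter
not commuting with `s`. -/
lemma no_commuting_gap {l r mid : List B} {s : B} (hcomm : ∀ t ∈ mid, M s t = 2)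
    (hred : cs.IsReduced (l ++ s :: (mid ++ s :: r))) : False := by
  have he : CommEquiv M (l ++ s :: (mid ++ s :: r)) (l ++ (mid ++ [s]) ++ (s :: r)) := by
    have := commEquiv_context (M := M) l (s :: r) (commEquiv_shift (s := s) hcomm)
    simpa [List.append_assoc] using this
  have hlen : (l ++ s :: (mid ++ s :: r)).length = (l ++ (mid ++ [s]) ++ (s :: r)).length :=
    (commEquiv_perm he).length_eq
  have hprod : cs.wordProd (l ++ s :: (mid ++ s :: r)) =
      cs.wordProd (l ++ (mid ++ [s]) ++ (s :: r)) := commEquiv_wordProd cs he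
  have hshort : cs.wordProd (l ++ (mid ++ [s]) ++ (s :: r)) = cs.wordProd (l ++ (mid ++ r)) := by
    simp only [cs.wordProd_append, cs.wordProd_cons, cs.wordProd_nil, mul_one, mul_assoc]
    rw [cs.simple_mul_simple_cancel_left]
  have hle := cs.length_wordProd_le (l ++ (mid ++ r))
  rw [← hshort, ← hprod] at hle
  rw [CoxeterSystem.IsReduced] at hred
  rw [hred] at hle
  simp only [List.length_append, List.length_cons] at hle
  omega

/-- In a reduced word of an FC element, between two occurrences of `s` there cannot be
exactly one non-commuting letter (with everything else commuting). -/
lemma braid_contra {w : W} (hw : IsFC cs w) {l r a b : List B} {s t : B}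
    (hst3 : M s t = 3) (hts : t ≠ s)
    (ha : ∀ x ∈ a, M s x = 2) (hb : ∀ x ∈ b, M s x = 2)
    (hred : IsRedexOf cs (l ++ s :: ((a ++ t :: b) ++ s :: r)) w) : False := by
  classical
  set ω₁ := l ++ s :: ((a ++ t :: b) ++ s :: r) with hω₁
  have he : CommEquiv M ω₁ (l ++ a ++ s :: t :: s :: (b ++ r)) := by
    have e1 : CommEquiv M (s :: a) (a ++ [s]) := commEquiv_shift ha
    have e2 : CommEquiv M (s :: b) (b ++ [s]) := commEquiv_shift hb
    have step1 : CommEquiv M ω₁ (l ++ (a ++ [s]) ++ (t :: (b ++ s :: r))) := by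
      have h := commEquiv_context (M := M) l (t :: (b ++ s :: r)) e1
      have heq : ω₁ = l ++ (s :: a) ++ (t :: (b ++ s :: r)) := by simp [hω₁]
      rw [heq]; exact h
    have step2 : CommEquiv M (l ++ (a ++ [s]) ++ (t :: (b ++ s :: r)))
        (l ++ a ++ s :: t :: s :: (b ++ r)) := by
      have h := commEquiv_context (M := M) (l ++ a ++ [s, t]) r (commEquiv_symm e2)
      have e3 : l ++ (a ++ [s]) ++ (t :: (b ++ s :: r)) = l ++ a ++ [s, t] ++ (b ++ [s]) ++ r := by
        simp
      have e4 : l ++ a ++ s :: t :: s :: (b ++ r) = l ++ a ++ [s, t] ++ (s :: b) ++ r := by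
        simp
      rw [e3, e4]; exact h
    exact step1.trans step2
  have hred' : IsRedexOf cs (l ++ a ++ s :: t :: s :: (b ++ r)) w := by
    constructor
    · rw [← hred.1]; exact (commEquiv_wordProd cs he).symm
    · have := hred.2
      rw [CoxeterSystem.IsReduced] at this ⊢
      rw [← commEquiv_wordProd cs he, ← (commEquiv_perm he).length_eq]
      exact this
  have hred'' : IsRedexOf cs (l ++ a ++ t :: s :: t :: (b ++ r)) w := by
    have hp : cs.wordProd (l ++ a ++ t :: s :: t :: (b ++ r)) =
        cs.wordProd (l ++ a ++ s :: t :: s :: (b ++ r)) := by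
      have e1 : cs.wordProd (t :: s :: t :: (b ++ r)) =
          (cs.simple t * cs.simple s * cs.simple t) * cs.wordProd (b ++ r) := by
        simp [cs.wordProd_cons, mul_assoc]
      have e2 : cs.wordProd (s :: t :: s :: (b ++ r)) =
          (cs.simple s * cs.simple t * cs.simple s) * cs.wordProd (b ++ r) := by
        simp [cs.wordProd_cons, mul_assoc]
      simp only [cs.wordProd_append]
      rw [e1, e2, simple_braid cs hst3]
    constructor
    · rw [hp]; exact hred'.1
    · have := hred'.2
      rw [CoxeterSystem.IsReduced] at this ⊢
      rw [hp, this]; simp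
  have heq : CommEquiv M (l ++ a ++ s :: t :: s :: (b ++ r))
      (l ++ a ++ t :: s :: t :: (b ++ r)) := hw _ _ hred' hred''
  have hcnt := ((commEquiv_perm heq).count_eq s)
  simp [List.count_append, List.count_cons, hts] at hcnt

lemma first_occ {α : Type*} [DecidableEq α] {x : α} {l : List α} (h : x ∈ l) :
    ∃ a b, l = a ++ x :: b ∧ x ∉ a := by
  induction l with
  | nil => simp at h
  | cons y l ih =>
    by_cases hyx : y = x
    · subst hyx; exact ⟨[], l, rfl, by simp⟩
    · have h' : x ∈ l := by
        rcases List.mem_cons.mp h with h1 | h1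
        · exact absurd h1.symm hyx
        · exact h1
      obtain ⟨a, b, rfl, hna⟩ := ih h'
      refine ⟨y :: a, b, rfl, ?_⟩
      simp only [List.mem_cons]
      rintro (h1 | h1)
      · exact hyx h1.symm
      · exact hna h1

/-- The key lemma: between two occurrences of `s` in a reduced word of an FC element,
where every letter either commutes with `s` or equals `x` (adjacent to `s`),
there must be two consecutive occurrences of `x`. -/
lemma key_gap [DecidableEq B] {w : W} (hw : IsFC cs w) {l r mid : List B} {s x : B}
    (hred : IsRedexOf cs (l ++ s :: (mid ++ s :: r)) w)
    (hx : x ≠ s) (hM3 : M s x = 3)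
    (hmid : ∀ t ∈ mid, M s t = 2 ∨ t = x) :
    ∃ a b c, mid = a ++ x :: (b ++ x :: c) ∧ x ∉ b := by
  classical
  by_cases hmem : x ∈ mid
  · obtain ⟨a, m', ha, hna⟩ := first_occ hmem
    by_cases hmem' : x ∈ m'
    · obtain ⟨b, c, hb, hnb⟩ := first_occ hmem'
      exact ⟨a, b, c, by rw [ha, hb], hnb⟩
    · exfalso
      subst ha
      have hcomm_a : ∀ t ∈ a, M s t = 2 := by
        intro t ht
        rcases hmid t (by simp [ht]) with h | h
        · exact h
        · exact absurd (h ▸ ht) hna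
      have hcomm_b : ∀ t ∈ m', M s t = 2 := by
        intro t ht
        rcases hmid t (by simp [ht]) with h | h
        · exact h
        · exact absurd (h ▸ ht) hmem'
      have hred2 : IsRedexOf cs (l ++ s :: ((a ++ x :: m') ++ s :: r)) w := by
        have e : l ++ s :: ((a ++ x :: m') ++ s :: r) = l ++ s :: (a ++ x :: m' ++ s :: r) := by
          simp [List.append_assoc]
        rw [e]; exact hred
      exact braid_contra hw hM3 hx hcomm_a hcomm_b hred2
  · exfalso
    have hcomm : ∀ t ∈ mid, M s t = 2 := by
      intro t ht
      rcases hmid t ht with h | h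
      · exact h
      · exact absurd (h ▸ ht) hmem
    exact no_commuting_gap hcomm hred.2





lemma cast_val {n a : ℕ} (ha : a ≤ n) : ((a : Fin (n + 1)) : ℕ) = a := by
  rw [Fin.val_natCast]; exact Nat.mod_eq_of_lt (by omega)

lemma cast_inj {n a b : ℕ} (ha : a ≤ n) (hb : b ≤ n) :
    (a : Fin (n + 1)) = (b : Fin (n + 1)) ↔ a = b := by
  rw [Fin.ext_iff, cast_val ha, cast_val hb]

lemma cast_sub_one_iff {n a b : ℕ} (ha : a ≤ n) (hb : b ≤ n) :
    ((a : Fin (n + 1)) - (b : Fin (n + 1)) = 1) ↔ (a = b + 1 ∨ (b = n ∧ a = 0)) := by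
  rw [sub_eq_iff_eq_add]
  have h1 : (1 : Fin (n + 1)) + (b : Fin (n + 1)) = ((1 + b : ℕ) : Fin (n + 1)) := by
    push_cast; ring
  rw [h1, Fin.ext_iff, cast_val ha, Fin.val_natCast]
  rcases Nat.lt_or_ge b n with h | h
  · rw [Nat.mod_eq_of_lt (by omega)]; omega
  · have hb' : b = n := le_antisymm hb h
    have h0 : (1 + b) % (n + 1) = 0 := by rw [hb', Nat.add_comm]; exact Nat.mod_self _
    rw [h0]; omega

lemma aA_two {n a b : ℕ} (ha : a ≤ n) (hb : b ≤ n)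
    (h : ¬(a = b ∨ a = b + 1 ∨ b = a + 1 ∨ (a = 0 ∧ b = n) ∨ (b = 0 ∧ a = n))) :
    affineAMatrix n (a : Fin (n + 1)) (b : Fin (n + 1)) = 2 := by
  push_neg at h
  obtain ⟨h0, h1, h2, h3, h4⟩ := h
  have hne : (a : Fin (n + 1)) ≠ (b : Fin (n + 1)) := by
    rw [Ne, cast_inj ha hb]; exact h0
  have hs1 : ¬((a : Fin (n + 1)) - (b : Fin (n + 1)) = 1) := by
    rw [cast_sub_one_iff ha hb]
    rintro (h | ⟨hb', ha'⟩)
    · exact h1 h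
    · omega
  have hs2 : ¬((b : Fin (n + 1)) - (a : Fin (n + 1)) = 1) := by
    rw [cast_sub_one_iff hb ha]
    rintro (h | ⟨ha', hb'⟩)
    · exact h2 h
    · omega
  show (if _ then _ else _) = 2
  rw [if_neg hne, if_neg (by tauto)]

lemma aA_three {n a b : ℕ} (hn : 2 ≤ n) (ha : a ≤ n) (hb : b ≤ n)
    (h : a = b + 1 ∨ b = a + 1 ∨ (a = 0 ∧ b = n) ∨ (b = 0 ∧ a = n)) :
    affineAMatrix n (a : Fin (n + 1)) (b : Fin (n + 1)) = 3 := by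
  have hne : (a : Fin (n + 1)) ≠ (b : Fin (n + 1)) := by
    rw [Ne, cast_inj ha hb]; omega
  have hadj : ((a : Fin (n + 1)) - (b : Fin (n + 1)) = 1) ∨
      ((b : Fin (n + 1)) - (a : Fin (n + 1)) = 1) := by
    rw [cast_sub_one_iff ha hb, cast_sub_one_iff hb ha]
    omega
  show (if _ then _ else _) = 3
  rw [if_neg hne, if_pos hadj]



lemma map_cast_eq {n : ℕ} (l : List ℕ) :
    (l.map fun k => (Fin.ofNat (n + 1) k : Fin (n + 1))) = l.map (fun k : ℕ => (k : Fin (n + 1))) := by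
  induction l with
  | nil => rfl
  | cons x l ih => simpa using ih

lemma descent {n : ℕ} (hn : 2 ≤ n) {W : Type*} [Group W]
    {cs : CoxeterSystem (affineAMatrix n) W} {w : W} (hw : IsFC cs w) :
    ∀ k, 1 ≤ k → k ≤ n - 1 → ∀ l r mid : List (Fin (n + 1)),
      (∀ t ∈ mid, 1 ≤ (t : ℕ) ∧ (t : ℕ) < k) →
      IsRedexOf cs (l ++ (k : Fin (n + 1)) :: (mid ++ (k : Fin (n + 1)) :: r)) w → False := by
  intro k
  induction k using Nat.strong_induction_on with
  | _ k ih =>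
    intro hk1 hkn l r mid hmid hred
    have hk_le : k ≤ n := by omega
    have hmid' : ∀ t ∈ mid, affineAMatrix n (k : Fin (n + 1)) t = 2 ∨
        t = ((k - 1 : ℕ) : Fin (n + 1)) := by
      intro t ht
      obtain ⟨ht1, ht2⟩ := hmid t ht
      by_cases hte : (t : ℕ) = k - 1
      · right; rw [Fin.ext_iff, cast_val (by omega : k - 1 ≤ n)]; exact hte
      · left
        rw [← Fin.cast_val_eq_self t]
        exact aA_two hk_le (by omega) (by omega)
    have hx : ((k - 1 : ℕ) : Fin (n + 1)) ≠ (k : Fin (n + 1)) := by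
      rw [Ne, cast_inj (by omega) hk_le]; omega
    have hM3 : affineAMatrix n (k : Fin (n + 1)) ((k - 1 : ℕ) : Fin (n + 1)) = 3 :=
      aA_three hn hk_le (by omega) (by omega)
    obtain ⟨a, b, c, hmid_eq, hnb⟩ := key_gap hw hred hx hM3 hmid'
    have hxmem : ((k - 1 : ℕ) : Fin (n + 1)) ∈ mid := by rw [hmid_eq]; simp
    have hxval := hmid _ hxmem
    rw [cast_val (by omega : k - 1 ≤ n)] at hxval
    have hk2 : 2 ≤ k := by omega
    have e : l ++ (k : Fin (n + 1)) :: (mid ++ (k : Fin (n + 1)) :: r) =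
        (l ++ (k : Fin (n + 1)) :: a) ++ ((k - 1 : ℕ) : Fin (n + 1)) ::
          (b ++ ((k - 1 : ℕ) : Fin (n + 1)) :: (c ++ (k : Fin (n + 1)) :: r)) := by
      rw [hmid_eq]; simp
    rw [e] at hred
    refine ih (k - 1) (by omega) (by omega) (by omega) _ _ b ?_ hred
    intro t ht
    have htm : t ∈ mid := by rw [hmid_eq]; simp [ht]
    obtain ⟨h1, h2⟩ := hmid t htm
    have htx : (t : ℕ) ≠ k - 1 := by
      intro h
      apply hnb
      have : t = ((k - 1 : ℕ) : Fin (n + 1)) := by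
        rw [Fin.ext_iff, cast_val (by omega : k - 1 ≤ n)]; exact h
      rw [← this]; exact ht
    omega

lemma ascent {n : ℕ} (hn : 2 ≤ n) {W : Type*} [Group W]
    {cs : CoxeterSystem (affineAMatrix n) W} {w : W} (hw : IsFC cs w) :
    ∀ d k, k + d = n - 2 → ∀ l r mid : List (Fin (n + 1)),
      (∀ t ∈ mid, k + 1 ≤ (t : ℕ) ∧ (t : ℕ) ≤ n - 2) →
      IsRedexOf cs (l ++ (k : Fin (n + 1)) :: (mid ++ (k : Fin (n + 1)) :: r)) w → False := by
  intro d
  induction d with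
  | zero =>
    intro k hk l r mid hmid hred
    refine no_commuting_gap (fun t ht => ?_) hred.2
    exact absurd (hmid t ht) (by omega)
  | succ d ihd =>
    intro k hk l r mid hmid hred
    have hk_le : k ≤ n := by omega
    have hmid' : ∀ t ∈ mid, affineAMatrix n (k : Fin (n + 1)) t = 2 ∨
        t = ((k + 1 : ℕ) : Fin (n + 1)) := by
      intro t ht
      obtain ⟨ht1, ht2⟩ := hmid t ht
      by_cases hte : (t : ℕ) = k + 1
      · right; rw [Fin.ext_iff, cast_val (by omega : k + 1 ≤ n)]; exact hte
      · left
        rw [← Fin.cast_val_eq_self t]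
        exact aA_two hk_le (by omega) (by omega)
    have hx : ((k + 1 : ℕ) : Fin (n + 1)) ≠ (k : Fin (n + 1)) := by
      rw [Ne, cast_inj (by omega) hk_le]; omega
    have hM3 : affineAMatrix n (k : Fin (n + 1)) ((k + 1 : ℕ) : Fin (n + 1)) = 3 :=
      aA_three hn hk_le (by omega) (by omega)
    obtain ⟨a, b, c, hmid_eq, hnb⟩ := key_gap hw hred hx hM3 hmid'
    have e : l ++ (k : Fin (n + 1)) :: (mid ++ (k : Fin (n + 1)) :: r) =
        (l ++ (k : Fin (n + 1)) :: a) ++ ((k + 1 : ℕ) : Fin (n + 1)) ::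
          (b ++ ((k + 1 : ℕ) : Fin (n + 1)) :: (c ++ (k : Fin (n + 1)) :: r)) := by
      rw [hmid_eq]; simp
    rw [e] at hred
    refine ihd (k + 1) (by omega) _ _ b ?_ hred
    intro t ht
    have htm : t ∈ mid := by rw [hmid_eq]; simp [ht]
    obtain ⟨h1, h2⟩ := hmid t htm
    have htx : (t : ℕ) ≠ k + 1 := by
      intro h
      apply hnb
      have : t = ((k + 1 : ℕ) : Fin (n + 1)) := by
        rw [Fin.ext_iff, cast_val (by omega : k + 1 ≤ n)]; exact h
      rw [← this]; exact ht
    omega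

lemma range_flatMap_split {α : Type*} (g : ℕ → List α) (m i : ℕ) (hi : 1 ≤ i) (him : i < m) :
    ∃ L R : List α, (List.range m).flatMap g = L ++ (g (i - 1) ++ (g i ++ R)) := by
  have hm : m = (i + 1) + (m - i - 1) := by omega
  have h2 : List.range (i + 1) = List.range (i - 1) ++ [i - 1] ++ [i] := by
    rw [List.range_succ]
    congr 1
    conv_lhs => rw [show i = (i - 1) + 1 by omega, List.range_succ]
  refine ⟨(List.range (i - 1)).flatMap g,
    ((List.range (m - i - 1)).map (fun x => (i + 1) + x)).flatMap g, ?_⟩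
  conv_lhs => rw [hm, List.range_add, h2]
  simp [List.flatMap_append, List.append_assoc]

end MFFaux

/-- If a fully commutative `w ∈ W(Ãₙ)` has affine length `m ≥ 2`, i.e. it has a reduced
expression `u₁ a_{n+1} u₂ a_{n+1} ⋯ u_m a_{n+1} u_{m+1}` with each `u_i` a word in the
generators `σ_1, …, σ_n` (0-based indices `< n`), then each middle factor `u_i`
(`2 ≤ i ≤ m`) is full: both `σ_1` (index `0`) and `σ_n` (index `n-1`) appear in it. -/
theorem middle_factors_full (n : ℕ) (hn : 2 ≤ n) {W : Type*} [Group W]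
    (cs : CoxeterSystem (affineAMatrix n) W) (w : W) (hw : IsFC cs w)
    (m : ℕ) (hm : 2 ≤ m) (vs : ℕ → List ℕ)
    (hvs : ∀ i, i ≤ m → ∀ k ∈ vs i, k < n)
    (hred : IsRedexOf cs
      ((((List.range m).flatMap fun i => vs i ++ [n]) ++ vs m).map
        fun k => (Fin.ofNat (n + 1) k : Fin (n + 1))) w) :
    ∀ i, 1 ≤ i → i < m → (0 ∈ vs i ∧ n - 1 ∈ vs i) := by
  intro i hi1 him
  rw [MFFaux.map_cast_eq] at hred
  obtain ⟨L, R, hsplit⟩ := MFFaux.range_flatMap_split (fun j => vs j ++ [n]) m i hi1 him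
  rw [hsplit] at hred
  have e : ((L ++ (vs (i - 1) ++ [n] ++ (vs i ++ [n] ++ R))) ++ vs m).map
      (fun k : ℕ => (k : Fin (n + 1))) =
      ((L ++ vs (i - 1)).map (fun k : ℕ => (k : Fin (n + 1)))) ++
        (n : Fin (n + 1)) :: (((vs i).map (fun k : ℕ => (k : Fin (n + 1)))) ++
          (n : Fin (n + 1)) :: ((R ++ vs m).map (fun k : ℕ => (k : Fin (n + 1))))) := by
    simp [List.map_append, List.append_assoc]
  rw [e] at hred
  have hred' := hred
  have hvsi : ∀ k ∈ vs i, k < n := hvs i (le_of_lt him)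
  have hvalmid : ∀ t ∈ (vs i).map (fun k : ℕ => (k : Fin (n + 1))), ∃ k ∈ vs i, (t : ℕ) = k := by
    intro t ht
    obtain ⟨k, hk, rfl⟩ := List.mem_map.mp ht
    exact ⟨k, hk, MFFaux.cast_val (by have := hvsi k hk; omega)⟩
  constructor
  · by_contra h0
    have hmid' : ∀ t ∈ (vs i).map (fun k : ℕ => (k : Fin (n + 1))),
        affineAMatrix n (n : Fin (n + 1)) t = 2 ∨ t = ((n - 1 : ℕ) : Fin (n + 1)) := by
      intro t ht
      obtain ⟨k, hk, hkv⟩ := hvalmid t ht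
      have hk1 : 1 ≤ k := Nat.pos_of_ne_zero (fun h => h0 (h ▸ hk))
      have hkn : k < n := hvsi k hk
      by_cases hte : (t : ℕ) = n - 1
      · right; rw [Fin.ext_iff, MFFaux.cast_val (by omega : n - 1 ≤ n)]; exact hte
      · left
        rw [← Fin.cast_val_eq_self t]
        exact MFFaux.aA_two (le_refl n) (by omega) (by omega)
    have hx : ((n - 1 : ℕ) : Fin (n + 1)) ≠ (n : Fin (n + 1)) := by
      rw [Ne, MFFaux.cast_inj (by omega) (le_refl n)]; omega
    have hM3 : affineAMatrix n (n : Fin (n + 1)) ((n - 1 : ℕ) : Fin (n + 1)) = 3 :=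
      MFFaux.aA_three hn (le_refl n) (by omega) (by omega)
    obtain ⟨a, b, c, heq, hnb⟩ := MFFaux.key_gap hw hred' hx hM3 hmid'
    rw [heq] at hred'
    have e : ((L ++ vs (i - 1)).map (fun k : ℕ => (k : Fin (n + 1)))) ++
        (n : Fin (n + 1)) :: ((a ++ ((n - 1 : ℕ) : Fin (n + 1)) ::
          (b ++ ((n - 1 : ℕ) : Fin (n + 1)) :: c)) ++
        (n : Fin (n + 1)) :: ((R ++ vs m).map (fun k : ℕ => (k : Fin (n + 1))))) =
        (((L ++ vs (i - 1)).map (fun k : ℕ => (k : Fin (n + 1)))) ++ (n : Fin (n + 1)) :: a) ++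
          ((n - 1 : ℕ) : Fin (n + 1)) :: (b ++ ((n - 1 : ℕ) : Fin (n + 1)) ::
            (c ++ (n : Fin (n + 1)) :: ((R ++ vs m).map (fun k : ℕ => (k : Fin (n + 1)))))) := by
      simp [List.append_assoc]
    rw [e] at hred'
    refine MFFaux.descent hn hw (n - 1) (by omega) (by omega) _ _ b ?_ hred'
    intro t ht
    have htm : t ∈ (vs i).map (fun k : ℕ => (k : Fin (n + 1))) := by rw [heq]; simp [ht]
    obtain ⟨k, hk, hkv⟩ := hvalmid t htm
    have hk1 : 1 ≤ k := Nat.pos_of_ne_zero (fun h => h0 (h ▸ hk))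
    have hkn : k < n := hvsi k hk
    have htx : (t : ℕ) ≠ n - 1 := by
      intro h
      apply hnb
      have : t = ((n - 1 : ℕ) : Fin (n + 1)) := by
        rw [Fin.ext_iff, MFFaux.cast_val (by omega : n - 1 ≤ n)]; exact h
      rw [← this]; exact ht
    omega
  · by_contra h1
    have hmid' : ∀ t ∈ (vs i).map (fun k : ℕ => (k : Fin (n + 1))),
        affineAMatrix n (n : Fin (n + 1)) t = 2 ∨ t = ((0 : ℕ) : Fin (n + 1)) := by
      intro t ht
      obtain ⟨k, hk, hkv⟩ := hvalmid t ht
      have hkn : k < n := hvsi k hk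
      have hkne : k ≠ n - 1 := fun h => h1 (h ▸ hk)
      by_cases hte : (t : ℕ) = 0
      · right; rw [Fin.ext_iff, MFFaux.cast_val (by omega : 0 ≤ n)]; exact hte
      · left
        rw [← Fin.cast_val_eq_self t]
        exact MFFaux.aA_two (le_refl n) (by omega) (by omega)
    have hx : ((0 : ℕ) : Fin (n + 1)) ≠ (n : Fin (n + 1)) := by
      rw [Ne, MFFaux.cast_inj (by omega) (le_refl n)]; omega
    have hM3 : affineAMatrix n (n : Fin (n + 1)) ((0 : ℕ) : Fin (n + 1)) = 3 :=
      MFFaux.aA_three hn (le_refl n) (by omega) (by omega)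
    obtain ⟨a, b, c, heq, hnb⟩ := MFFaux.key_gap hw hred' hx hM3 hmid'
    rw [heq] at hred'
    have e : ((L ++ vs (i - 1)).map (fun k : ℕ => (k : Fin (n + 1)))) ++
        (n : Fin (n + 1)) :: ((a ++ ((0 : ℕ) : Fin (n + 1)) ::
          (b ++ ((0 : ℕ) : Fin (n + 1)) :: c)) ++
        (n : Fin (n + 1)) :: ((R ++ vs m).map (fun k : ℕ => (k : Fin (n + 1))))) =
        (((L ++ vs (i - 1)).map (fun k : ℕ => (k : Fin (n + 1)))) ++ (n : Fin (n + 1)) :: a) ++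
          ((0 : ℕ) : Fin (n + 1)) :: (b ++ ((0 : ℕ) : Fin (n + 1)) ::
            (c ++ (n : Fin (n + 1)) :: ((R ++ vs m).map (fun k : ℕ => (k : Fin (n + 1)))))) := by
      simp [List.append_assoc]
    rw [e] at hred'
    refine MFFaux.ascent hn hw (n - 2) 0 (by omega) _ _ b ?_ hred'
    intro t ht
    have htm : t ∈ (vs i).map (fun k : ℕ => (k : Fin (n + 1))) := by rw [heq]; simp [ht]
    obtain ⟨k, hk, hkv⟩ := hvalmid t htm
    have hkn : k < n := hvsi k hk
    have hkne : k ≠ n - 1 := fun h => h1 (h ▸ hk)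
    have htx : (t : ℕ) ≠ 0 := by
      intro h
      apply hnb
      have : t = ((0 : ℕ) : Fin (n + 1)) := by
        rw [Fin.ext_iff, MFFaux.cast_val (by omega : 0 ≤ n)]; exact h
      rw [← this]; exact ht
    omega
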